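/- Let a be a Hopf monoid in a braided monoidal category C and let θ : a → 𝟙 be a normalized right cointegral. Then π := ρ_a ∘ (id_a ⊗ Θ) ∘ α ∘ (δ ⊗ id_a) : a ⊗ a → a (where Θ := θ ∘ μ ∘ (S ⊗ id_a)) satisfies π ∘ δ = id_a and (id ⊗ π) ∘ α ∘ (δ ⊗ id) = δ ∘ π = (π ⊗ id) ∘ α⁻¹ ∘ (id ⊗ δ); in particular the comonoid (a, δ, ε) is coseparable. -/

import Mathlib

open CategoryTheory MonoidalCategory

universe v u

variable (C : Type u) [Category.{v} C] [MonoidalCategory C] [BraidedCategory C]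

/-- The middle-four interchange morphism, built from associators and the braiding,
used to equip the tensor product of two monoids with a monoid structure
`(μ ⊗ μ) ∘ (id ⊗ β ⊗ id)`. -/
def mid4 {C : Type u} [Category.{v} C] [MonoidalCategory C] [BraidedCategory C]
    (W X Y Z : C) : (W ⊗ X) ⊗ (Y ⊗ Z) ⟶ (W ⊗ Y) ⊗ (X ⊗ Z) :=
  (α_ W X (Y ⊗ Z)).hom ≫ (W ◁ (α_ X Y Z).inv) ≫ (W ◁ ((β_ X Y).hom ▷ Z)) ≫
    (W ◁ (α_ Y X Z).hom) ≫ (α_ W Y (X ⊗ Z)).inv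

/-- A Hopf monoid in a braided monoidal category `C`: an object `a` with a monoid
structure `(mul, one)`, a comonoid structure `(comul, counit)` which is a bimonoid
(`comul` and `counit` are monoid morphisms, where `a ⊗ a` carries the multiplication
`(mul ⊗ mul) ∘ (id ⊗ β ⊗ id)`), together with an antipode. -/
structure HopfMonoidIn where
  a : C
  mul : a ⊗ a ⟶ a
  one : 𝟙_ C ⟶ a
  comul : a ⟶ a ⊗ a
  counit : a ⟶ 𝟙_ C
  antipode : a ⟶ a
  mul_assoc' : (mul ⊗ₘ 𝟙 a) ≫ mul = (α_ a a a).hom ≫ (𝟙 a ⊗ₘ mul) ≫ mul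
  one_mul' : (λ_ a).inv ≫ (one ⊗ₘ 𝟙 a) ≫ mul = 𝟙 a
  mul_one' : (ρ_ a).inv ≫ (𝟙 a ⊗ₘ one) ≫ mul = 𝟙 a
  comul_coassoc' : comul ≫ (comul ⊗ₘ 𝟙 a) ≫ (α_ a a a).hom = comul ≫ (𝟙 a ⊗ₘ comul)
  counit_comul' : comul ≫ (counit ⊗ₘ 𝟙 a) ≫ (λ_ a).hom = 𝟙 a
  comul_counit' : comul ≫ (𝟙 a ⊗ₘ counit) ≫ (ρ_ a).hom = 𝟙 a
  mul_comul' : mul ≫ comul = (comul ⊗ₘ comul) ≫ mid4 a a a a ≫ (mul ⊗ₘ mul)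
  one_comul' : one ≫ comul = (λ_ (𝟙_ C)).inv ≫ (one ⊗ₘ one)
  mul_counit' : mul ≫ counit = (counit ⊗ₘ counit) ≫ (λ_ (𝟙_ C)).hom
  one_counit' : one ≫ counit = 𝟙 (𝟙_ C)
  antipode_left' : comul ≫ (antipode ⊗ₘ 𝟙 a) ≫ mul = counit ≫ one
  antipode_right' : comul ≫ (𝟙 a ⊗ₘ antipode) ≫ mul = counit ≫ one

section Aux
set_option linter.unusedSectionVars false

variable {C : Type u} [Category.{v} C] [MonoidalCategory C] [BraidedCategory C]
variable {A : C}

private lemma g1 (d : A ⟶ A ⊗ A) (m : A ⊗ A ⟶ A) (s : A ⟶ A) (e : A ⟶ 𝟙_ C) (u : 𝟙_ C ⟶ A)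
    (θ : A ⟶ 𝟙_ C)
    (hco : d ≫ (d ▷ A) ≫ (α_ A A A).hom = d ≫ (A ◁ d))
    (hcu : d ≫ (A ◁ e) ≫ (ρ_ A).hom = 𝟙 A)
    (hsl : d ≫ (s ▷ A) ≫ m = e ≫ u)
    (hθn : u ≫ θ = 𝟙 _) :
    d ≫ ((d ▷ A) ≫ (α_ A A A).hom ≫ (A ◁ ((s ▷ A) ≫ m ≫ θ)) ≫ (ρ_ A).hom) = 𝟙 A := by
  have hco' := reassoc_of% hco
  rw [hco']
  rw [← MonoidalCategory.whiskerLeft_comp_assoc]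
  rw [show d ≫ (s ▷ A) ≫ m ≫ θ = e by
    rw [reassoc_of% hsl, hθn, Category.comp_id]]
  exact hcu

private lemma g2 (d : A ⟶ A ⊗ A) (Θ : A ⊗ A ⟶ 𝟙_ C)
    (hco : d ≫ (d ▷ A) ≫ (α_ A A A).hom = d ≫ (A ◁ d)) :
    (d ▷ A) ≫ (α_ A A A).hom ≫
      (A ◁ ((d ▷ A) ≫ (α_ A A A).hom ≫ (A ◁ Θ) ≫ (ρ_ A).hom)) =
    ((d ▷ A) ≫ (α_ A A A).hom ≫ (A ◁ Θ) ≫ (ρ_ A).hom) ≫ d := by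
  have hco' : d ≫ (d ▷ A) = (d ≫ (A ◁ d)) ≫ (α_ A A A).inv := by
    rw [← hco]; simp
  calc (d ▷ A) ≫ (α_ A A A).hom ≫
      (A ◁ ((d ▷ A) ≫ (α_ A A A).hom ≫ (A ◁ Θ) ≫ (ρ_ A).hom))
      = ((d ≫ (A ◁ d)) ▷ A) ≫ (α_ A (A ⊗ A) A).hom ≫ (A ◁ (α_ A A A).hom) ≫
          (A ◁ (A ◁ Θ)) ≫ (A ◁ (ρ_ A).hom) := by
        simp only [MonoidalCategory.whiskerLeft_comp, comp_whiskerRight, Category.assoc]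
        slice_lhs 2 3 => rw [← associator_naturality_middle]
        simp only [Category.assoc]
    _ = ((d ≫ (d ▷ A)) ▷ A) ≫ ((α_ A A A).hom ▷ A) ≫ (α_ A (A ⊗ A) A).hom ≫
          (A ◁ (α_ A A A).hom) ≫ (A ◁ (A ◁ Θ)) ≫ (A ◁ (ρ_ A).hom) := by
        have h : (d ≫ (d ▷ A)) ▷ A ≫ (α_ A A A).hom ▷ A = (d ≫ (A ◁ d)) ▷ A := by
          rw [← comp_whiskerRight, Category.assoc, hco]
        rw [reassoc_of% h]
    _ = ((d ≫ (d ▷ A)) ▷ A) ≫ (α_ (A ⊗ A) A A).hom ≫ ((A ⊗ A) ◁ Θ) ≫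
          (ρ_ (A ⊗ A)).hom := by
        simp only [comp_whiskerRight, Category.assoc]
        congr 2
        monoidal
    _ = (d ▷ A) ≫ (α_ A A A).hom ≫ (d ▷ (A ⊗ A)) ≫ ((A ⊗ A) ◁ Θ) ≫
          (ρ_ (A ⊗ A)).hom := by
        simp only [comp_whiskerRight, Category.assoc]
        slice_lhs 2 3 => rw [associator_naturality_left]
        simp only [Category.assoc]
    _ = (d ▷ A) ≫ (α_ A A A).hom ≫ (A ◁ Θ) ≫ (d ▷ 𝟙_ C) ≫ (ρ_ (A ⊗ A)).hom := by
        slice_lhs 3 4 => rw [← whisker_exchange]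
        simp only [Category.assoc]
    _ = ((d ▷ A) ≫ (α_ A A A).hom ≫ (A ◁ Θ) ≫ (ρ_ A).hom) ≫ d := by
        simp only [Category.assoc]
        congr 3
        rw [rightUnitor_naturality]

set_option maxHeartbeats 1000000 in
private lemma lTpi (d : A ⟶ A ⊗ A) (m : A ⊗ A ⟶ A) (s : A ⟶ A) (e : A ⟶ 𝟙_ C) (u : 𝟙_ C ⟶ A)
    (θ : A ⟶ 𝟙_ C)
    (hco : d ≫ (d ▷ A) ≫ (α_ A A A).hom = d ≫ (A ◁ d))
    (hma : (m ▷ A) ≫ m = (α_ A A A).hom ≫ (A ◁ m) ≫ m)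
    (hsl : d ≫ (s ▷ A) ≫ m = e ≫ u)
    (hcu : d ≫ (A ◁ e) ≫ (ρ_ A).hom = 𝟙 A)
    (hlu : (u ▷ A) ≫ m = (λ_ A).hom) :
    ((d ▷ A) ≫ (α_ A A A).hom ≫ (A ◁ m)) ≫
      ((d ▷ A) ≫ (α_ A A A).hom ≫ (A ◁ ((s ▷ A) ≫ m ≫ θ)) ≫ (ρ_ A).hom) =
    (A ◁ θ) ≫ (ρ_ A).hom := by
  have hma' : (A ◁ m) ≫ m = (α_ A A A).inv ≫ (m ▷ A) ≫ m := by
    rw [hma]; simp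
  simp only [MonoidalCategory.whiskerLeft_comp, Category.assoc]
  -- now: d▷A ≫ α ≫ A◁m ≫ d▷A ≫ α ≫ A◁(s▷A) ≫ A◁m ≫ A◁θ ≫ ρ
  slice_lhs 3 4 => rw [whisker_exchange]
  slice_lhs 2 3 => rw [← associator_naturality_left]
  slice_lhs 4 5 => rw [associator_naturality_right]
  -- d▷A ≫ d▷A▷A ≫ α_{A⊗A,A,A} ≫ α_{A,A,A⊗A} ≫ A◁(A◁m) ≫ A◁(s▷A) ≫ A◁m ≫ A◁θ ≫ ρ
  slice_lhs 5 6 =>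
    rw [← MonoidalCategory.whiskerLeft_comp, whisker_exchange,
      MonoidalCategory.whiskerLeft_comp]
  -- ... ≫ A◁(s▷(A⊗A)) ≫ A◁(A◁m) ≫ A◁m ≫ A◁θ ≫ ρ
  slice_lhs 6 7 =>
    rw [← MonoidalCategory.whiskerLeft_comp]
  slice_lhs 6 7 =>
    rw [← MonoidalCategory.whiskerLeft_comp, hma',
      MonoidalCategory.whiskerLeft_comp, MonoidalCategory.whiskerLeft_comp]
  slice_lhs 5 6 =>
    rw [← MonoidalCategory.whiskerLeft_comp, associator_inv_naturality_left,
      MonoidalCategory.whiskerLeft_comp]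
  -- d▷A ≫ d▷A▷A ≫ α ≫ α ≫ A◁α⁻¹ ≫ A◁(s▷A▷A) ≫ A◁(m▷A≫m) ≫ A◁θ ≫ ρ
  slice_lhs 6 7 =>
    rw [← MonoidalCategory.whiskerLeft_comp, ← Category.assoc, ← comp_whiskerRight,
      MonoidalCategory.whiskerLeft_comp]
  -- A◁((s▷A≫m)▷A) ≫ A◁m
  have pent : (d ▷ A ▷ A) ≫ (α_ (A ⊗ A) A A).hom ≫ (α_ A A (A ⊗ A)).hom ≫
      (A ◁ (α_ A A A).inv) = ((d ▷ A ≫ (α_ A A A).hom) ▷ A) ≫ (α_ A (A ⊗ A) A).hom := by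
    monoidal
  slice_lhs 2 5 => rw [pent]
  simp only [comp_whiskerRight, Category.assoc]
  -- d▷A ≫ (d▷A)▷A ≫ α.hom▷A ≫ α_{A,A⊗A,A} ≫ A◁((s▷A≫m)▷A) ≫ A◁m ≫ A◁θ ≫ ρ
  have hco2 : (d ▷ A) ≫ ((d ▷ A) ▷ A) ≫ ((α_ A A A).hom ▷ A) = (d ▷ A) ≫ ((A ◁ d) ▷ A) := by
    simp only [← comp_whiskerRight, Category.assoc]
    rw [hco]
  slice_lhs 1 3 => rw [hco2]
  slice_lhs 2 3 => rw [associator_naturality_middle]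
  -- d▷A ≫ α_{A,A,A}.hom ≫ A◁(d▷A) ≫ A◁((s▷A≫m)▷A) ≫ A◁m ≫ A◁θ ≫ ρ
  slice_lhs 3 4 =>
    rw [← MonoidalCategory.whiskerLeft_comp]
  rw [show d ▷ A ≫ s ▷ A ▷ A ≫ m ▷ A = e ▷ A ≫ u ▷ A from by
    simp only [← comp_whiskerRight, Category.assoc]
    rw [hsl]]
  simp only [MonoidalCategory.whiskerLeft_comp, Category.assoc]
  -- d▷A ≫ α ≫ A◁(e▷A) ≫ A◁(u▷A) ≫ A◁m ≫ A◁θ ≫ ρ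
  slice_lhs 4 5 =>
    rw [← MonoidalCategory.whiskerLeft_comp, hlu]
  -- d▷A ≫ α ≫ A◁(e▷A) ≫ A◁λ.hom ≫ A◁θ ≫ ρ
  have fin : d ▷ A ≫ (α_ A A A).hom ≫ A ◁ (e ▷ A) ≫ A ◁ (λ_ A).hom =
      (d ≫ A ◁ e ≫ (ρ_ A).hom) ▷ A := by
    monoidal
  slice_lhs 1 4 => rw [fin]
  rw [hcu]
  simp

set_option maxHeartbeats 1000000 in
private lemma lNT (d : A ⟶ A ⊗ A) (m : A ⊗ A ⟶ A) (s : A ⟶ A) (e : A ⟶ 𝟙_ C) (u : 𝟙_ C ⟶ A)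
    (hco : d ≫ (d ▷ A) ≫ (α_ A A A).hom = d ≫ (A ◁ d))
    (hma : (m ▷ A) ≫ m = (α_ A A A).hom ≫ (A ◁ m) ≫ m)
    (hsr : d ≫ (A ◁ s) ≫ m = e ≫ u)
    (hcu : d ≫ (A ◁ e) ≫ (ρ_ A).hom = 𝟙 A)
    (hlu : (u ▷ A) ≫ m = (λ_ A).hom) :
    ((d ▷ A) ≫ (α_ A A A).hom ≫ (A ◁ ((s ▷ A) ≫ m))) ≫
      ((d ▷ A) ≫ (α_ A A A).hom ≫ (A ◁ m)) = 𝟙 (A ⊗ A) := by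
  have hma' : (A ◁ m) ≫ m = (α_ A A A).inv ≫ (m ▷ A) ≫ m := by
    rw [hma]; simp
  simp only [MonoidalCategory.whiskerLeft_comp, Category.assoc]
  -- d▷A ≫ α ≫ A◁(s▷A) ≫ A◁m ≫ d▷A ≫ α ≫ A◁m
  slice_lhs 4 5 => rw [whisker_exchange]
  slice_lhs 3 4 => rw [whisker_exchange]
  slice_lhs 2 3 => rw [← associator_naturality_left]
  slice_lhs 5 6 => rw [associator_naturality_right]
  slice_lhs 4 5 => rw [associator_naturality_right]
  -- d▷A ≫ d▷A▷A ≫ α_{A⊗A,A,A} ≫ α_{A,A,A⊗A} ≫ A◁(A◁(s▷A)) ≫ A◁(A◁m) ≫ A◁m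
  slice_lhs 6 7 =>
    rw [← MonoidalCategory.whiskerLeft_comp, hma', MonoidalCategory.whiskerLeft_comp,
      MonoidalCategory.whiskerLeft_comp]
  -- ... ≫ A◁(A◁(s▷A)) ≫ A◁α⁻¹ ≫ A◁(m▷A) ≫ A◁m
  slice_lhs 5 6 =>
    rw [← MonoidalCategory.whiskerLeft_comp, associator_inv_naturality_middle,
      MonoidalCategory.whiskerLeft_comp]
  have pent : (d ▷ A ▷ A) ≫ (α_ (A ⊗ A) A A).hom ≫ (α_ A A (A ⊗ A)).hom ≫
      (A ◁ (α_ A A A).inv) = ((d ▷ A ≫ (α_ A A A).hom) ▷ A) ≫ (α_ A (A ⊗ A) A).hom := by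
    monoidal
  slice_lhs 2 5 => rw [pent]
  simp only [comp_whiskerRight, Category.assoc]
  have hco2 : (d ▷ A) ≫ ((d ▷ A) ▷ A) ≫ ((α_ A A A).hom ▷ A) = (d ▷ A) ≫ ((A ◁ d) ▷ A) := by
    simp only [← comp_whiskerRight, Category.assoc]
    rw [hco]
  slice_lhs 1 3 => rw [hco2]
  slice_lhs 2 3 => rw [associator_naturality_middle]
  -- d▷A ≫ α ≫ A◁(d▷A) ≫ A◁((A◁s)▷A) ≫ A◁(m▷A) ≫ A◁m
  slice_lhs 3 5 =>
    rw [← MonoidalCategory.whiskerLeft_comp, ← MonoidalCategory.whiskerLeft_comp]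
  rw [show d ▷ A ≫ (A ◁ s) ▷ A ≫ m ▷ A = e ▷ A ≫ u ▷ A from by
    simp only [← comp_whiskerRight, Category.assoc]
    rw [hsr]]
  simp only [MonoidalCategory.whiskerLeft_comp, Category.assoc]
  -- d▷A ≫ α ≫ A◁(e▷A) ≫ A◁(u▷A) ≫ A◁m
  slice_lhs 4 5 =>
    rw [← MonoidalCategory.whiskerLeft_comp, hlu]
  have fin : d ▷ A ≫ (α_ A A A).hom ≫ A ◁ (e ▷ A) ≫ A ◁ (λ_ A).hom =
      (d ≫ A ◁ e ≫ (ρ_ A).hom) ▷ A := by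
    monoidal
  slice_lhs 1 4 => rw [fin]
  rw [hcu]
  simp


set_option maxHeartbeats 1000000 in
private lemma lTmove (d : A ⟶ A ⊗ A) (m : A ⊗ A ⟶ A) (p : A ⊗ A ⟶ A) (θ' : A ⟶ 𝟙_ C)
    (hco : d ≫ (d ▷ A) ≫ (α_ A A A).hom = d ≫ (A ◁ d))
    (hbi : m ≫ d = ((d ▷ A) ≫ ((A ⊗ A) ◁ d)) ≫ mid4 A A A A ≫
      ((m ▷ (A ⊗ A)) ≫ (A ◁ m)))
    (hTp : ((d ▷ A) ≫ (α_ A A A).hom ≫ (A ◁ m)) ≫ p = (A ◁ θ') ≫ (ρ_ A).hom) :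
    ((d ▷ A) ≫ (α_ A A A).hom ≫ (A ◁ m)) ≫ (A ◁ d) ≫ (α_ A A A).inv ≫ (p ▷ A) =
    (d ▷ A) ≫ ((A ⊗ A) ◁ (d ≫ (θ' ▷ A) ≫ (λ_ A).hom)) ≫ (α_ A A A).hom ≫ (A ◁ m) := by
  simp only [Category.assoc]
  slice_lhs 3 4 =>
    rw [← MonoidalCategory.whiskerLeft_comp, hbi]
  simp only [mid4, MonoidalCategory.whiskerLeft_comp, Category.assoc]
  -- tail: move p before the last multiplication
  slice_lhs 11 12 => rw [associator_inv_naturality_right]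
  slice_lhs 12 13 => rw [whisker_exchange]
  -- front flip via coassociativity
  slice_lhs 2 3 => rw [← associator_naturality_middle]
  have hflip : (d ▷ A) ≫ ((A ◁ d) ▷ A) = ((d ▷ A) ≫ ((d ▷ A) ▷ A)) ≫ ((α_ A A A).hom ▷ A) := by
    simp only [← comp_whiskerRight, Category.assoc]
    rw [hco]
  simp only [Category.assoc]
  rw [reassoc_of% hflip]
  -- bridge: bring δ_y to the left of the inner comultiplication
  have br1 : ((α_ A A A).hom ▷ A) ≫ (α_ A (A ⊗ A) A).hom ≫ (A ◁ ((A ⊗ A) ◁ d)) =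
      (((A ⊗ A) ⊗ A) ◁ d) ≫ ((α_ A A A).hom ▷ (A ⊗ A)) ≫ (α_ A (A ⊗ A) (A ⊗ A)).hom := by
    monoidal
  slice_lhs 3 5 => rw [br1]
  simp only [Category.assoc]
  slice_lhs 2 3 => rw [← whisker_exchange]
  simp only [Category.assoc]
  have br2 : ((d ▷ A) ▷ (A ⊗ A)) ≫ ((α_ A A A).hom ▷ (A ⊗ A)) ≫
      (α_ A (A ⊗ A) (A ⊗ A)).hom ≫ (A ◁ (α_ A A (A ⊗ A)).hom) ≫
      (A ◁ (A ◁ (α_ A A A).inv)) ≫ (A ◁ (A ◁ ((β_ A A).hom ▷ A))) =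
      (α_ A A (A ⊗ A)).hom ≫ (A ◁ (α_ A A A).inv) ≫ (d ▷ ((A ⊗ A) ⊗ A)) ≫
      ((A ⊗ A) ◁ ((β_ A A).hom ▷ A)) ≫ (α_ A A ((A ⊗ A) ⊗ A)).hom := by
    monoidal
  slice_lhs 3 8 => rw [br2]
  simp only [Category.assoc]
  slice_lhs 5 6 => rw [← whisker_exchange]
  simp only [Category.assoc]
  have br3 : (d ▷ ((A ⊗ A) ⊗ A)) ≫ (α_ A A ((A ⊗ A) ⊗ A)).hom ≫
      (A ◁ (A ◁ (α_ A A A).hom)) ≫ (A ◁ (α_ A A (A ⊗ A)).inv) ≫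
      (A ◁ (m ▷ (A ⊗ A))) ≫ (α_ A A (A ⊗ A)).inv ≫ (p ▷ (A ⊗ A)) =
      (A ◁ (α_ A A A).hom) ≫ (α_ A A (A ⊗ A)).inv ≫ ((d ▷ A) ▷ (A ⊗ A)) ≫
      ((α_ A A A).hom ▷ (A ⊗ A)) ≫ ((A ◁ m) ▷ (A ⊗ A)) ≫ (p ▷ (A ⊗ A)) := by
    monoidal
  slice_lhs 6 12 => rw [br3]
  simp only [Category.assoc]
  have hTp' : (d ▷ A) ≫ (α_ A A A).hom ≫ (A ◁ m) ≫ p = (A ◁ θ') ≫ (ρ_ A).hom := by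
    simpa using hTp
  have hTpw : ((d ▷ A) ▷ (A ⊗ A)) ≫ ((α_ A A A).hom ▷ (A ⊗ A)) ≫
      ((A ◁ m) ▷ (A ⊗ A)) ≫ (p ▷ (A ⊗ A)) =
      ((A ◁ θ') ▷ (A ⊗ A)) ≫ ((ρ_ A).hom ▷ (A ⊗ A)) := by
    simp only [← comp_whiskerRight, Category.assoc]
    rw [hTp']
  slice_lhs 8 11 => rw [hTpw]
  simp only [Category.assoc]
  have br4 : (A ◁ (α_ A A A).hom) ≫ (α_ A A (A ⊗ A)).inv ≫ ((A ◁ θ') ▷ (A ⊗ A)) =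
      (A ◁ ((θ' ▷ A) ▷ A)) ≫ (A ◁ ((α_ (𝟙_ C) A A).hom)) ≫ (α_ A (𝟙_ C) (A ⊗ A)).inv := by
    monoidal
  slice_lhs 6 8 => rw [br4]
  simp only [Category.assoc]
  slice_lhs 5 6 =>
    rw [← MonoidalCategory.whiskerLeft_comp, ← comp_whiskerRight,
      ← BraidedCategory.braiding_naturality_right, braiding_tensorUnit_right,
      comp_whiskerRight, comp_whiskerRight, MonoidalCategory.whiskerLeft_comp,
      MonoidalCategory.whiskerLeft_comp]
  simp only [Category.assoc]
  monoidal

set_option maxHeartbeats 1000000 in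
private lemma g3 (d : A ⟶ A ⊗ A) (m : A ⊗ A ⟶ A) (s : A ⟶ A) (e : A ⟶ 𝟙_ C) (u : 𝟙_ C ⟶ A)
    (θ : A ⟶ 𝟙_ C)
    (hco : d ≫ (d ▷ A) ≫ (α_ A A A).hom = d ≫ (A ◁ d))
    (hma : (m ▷ A) ≫ m = (α_ A A A).hom ≫ (A ◁ m) ≫ m)
    (hsl : d ≫ (s ▷ A) ≫ m = e ≫ u)
    (hsr : d ≫ (A ◁ s) ≫ m = e ≫ u)
    (hcu : d ≫ (A ◁ e) ≫ (ρ_ A).hom = 𝟙 A)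
    (hlu : (u ▷ A) ≫ m = (λ_ A).hom)
    (hru : (A ◁ u) ≫ m = (ρ_ A).hom)
    (hbi : m ≫ d = ((d ▷ A) ≫ ((A ⊗ A) ◁ d)) ≫ mid4 A A A A ≫
      ((m ▷ (A ⊗ A)) ≫ (A ◁ m)))
    (hθ1 : d ≫ (θ ▷ A) ≫ (λ_ A).hom = θ ≫ u) :
    ((d ▷ A) ≫ (α_ A A A).hom ≫ (A ◁ ((s ▷ A) ≫ m ≫ θ)) ≫ (ρ_ A).hom) ≫ d =
    (A ◁ d) ≫ (α_ A A A).inv ≫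
      (((d ▷ A) ≫ (α_ A A A).hom ≫ (A ◁ ((s ▷ A) ≫ m ≫ θ)) ≫ (ρ_ A).hom) ▷ A) := by
  set π : A ⊗ A ⟶ A :=
    (d ▷ A) ≫ (α_ A A A).hom ≫ (A ◁ ((s ▷ A) ≫ m ≫ θ)) ≫ (ρ_ A).hom with hπ
  set T : A ⊗ A ⟶ A ⊗ A := (d ▷ A) ≫ (α_ A A A).hom ≫ (A ◁ m) with hT
  set N : A ⊗ A ⟶ A ⊗ A := (d ▷ A) ≫ (α_ A A A).hom ≫ (A ◁ ((s ▷ A) ≫ m)) with hN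
  have hTp : T ≫ π = (A ◁ θ) ≫ (ρ_ A).hom := lTpi d m s e u θ hco hma hsl hcu hlu
  have hNT : N ≫ T = 𝟙 (A ⊗ A) := lNT d m s e u hco hma hsr hcu hlu
  have hmv := lTmove d m π θ hco hbi hTp
  have key : T ≫ (π ≫ d) = T ≫ ((A ◁ d) ≫ (α_ A A A).inv ≫ (π ▷ A)) := by
    have h1 : T ≫ (π ≫ d) = (d ▷ A) ≫ ((A ⊗ A) ◁ θ) ≫ (ρ_ (A ⊗ A)).hom := by
      rw [← Category.assoc, hTp]
      rw [Category.assoc, ← rightUnitor_naturality]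
      slice_lhs 1 2 => rw [whisker_exchange]
      simp only [Category.assoc]
    have h2 : T ≫ ((A ◁ d) ≫ (α_ A A A).inv ≫ (π ▷ A)) =
        (d ▷ A) ≫ ((A ⊗ A) ◁ θ) ≫ (ρ_ (A ⊗ A)).hom := by
      rw [hT, hmv, hθ1]
      simp only [MonoidalCategory.whiskerLeft_comp, Category.assoc]
      congr 1
      -- (A⊗A)◁θ ≫ (A⊗A)◁u ≫ α ≫ A◁m = (A⊗A)◁θ ≫ ρ
      slice_lhs 2 3 => rw [associator_naturality_right]
      slice_lhs 3 4 => rw [← MonoidalCategory.whiskerLeft_comp, hru]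
      congr 1
      monoidal
    rw [h1, h2]
  calc π ≫ d = (N ≫ T) ≫ (π ≫ d) := by rw [hNT, Category.id_comp]
    _ = N ≫ (T ≫ (π ≫ d)) := Category.assoc _ _ _
    _ = N ≫ (T ≫ ((A ◁ d) ≫ (α_ A A A).inv ≫ (π ▷ A))) := by rw [key]
    _ = (N ≫ T) ≫ ((A ◁ d) ≫ (α_ A A A).inv ≫ (π ▷ A)) := (Category.assoc _ _ _).symm
    _ = (A ◁ d) ≫ (α_ A A A).inv ≫ (π ▷ A) := by rw [hNT, Category.id_comp]


end Aux

/-- For a Hopf monoid `a` in a braided monoidal category and a normalized right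
cointegral `θ : a → 𝟙`, the morphism `π := ρ ∘ (id ⊗ Θ) ∘ α ∘ (δ ⊗ id)`
(with `Θ := θ ∘ μ ∘ (S ⊗ id)`) is an `a`-bicomodule retraction of `δ`;
in particular the comonoid `(a, δ, ε)` is coseparable. -/
theorem hopf_monoid_normalized_cointegral_coseparable (H : HopfMonoidIn C)
    (θ : H.a ⟶ 𝟙_ C)
    (hθ : H.comul ≫ (θ ⊗ₘ 𝟙 H.a) ≫ (λ_ H.a).hom = θ ≫ H.one)
    (hnorm : H.one ≫ θ = 𝟙 (𝟙_ C)) :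
    H.comul ≫ ((H.comul ⊗ₘ 𝟙 H.a) ≫ (α_ H.a H.a H.a).hom ≫
        (𝟙 H.a ⊗ₘ ((H.antipode ⊗ₘ 𝟙 H.a) ≫ H.mul ≫ θ)) ≫ (ρ_ H.a).hom) = 𝟙 H.a ∧
    (H.comul ⊗ₘ 𝟙 H.a) ≫ (α_ H.a H.a H.a).hom ≫
        (𝟙 H.a ⊗ₘ ((H.comul ⊗ₘ 𝟙 H.a) ≫ (α_ H.a H.a H.a).hom ≫
          (𝟙 H.a ⊗ₘ ((H.antipode ⊗ₘ 𝟙 H.a) ≫ H.mul ≫ θ)) ≫ (ρ_ H.a).hom)) =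
      ((H.comul ⊗ₘ 𝟙 H.a) ≫ (α_ H.a H.a H.a).hom ≫
        (𝟙 H.a ⊗ₘ ((H.antipode ⊗ₘ 𝟙 H.a) ≫ H.mul ≫ θ)) ≫ (ρ_ H.a).hom) ≫ H.comul ∧
    ((H.comul ⊗ₘ 𝟙 H.a) ≫ (α_ H.a H.a H.a).hom ≫
        (𝟙 H.a ⊗ₘ ((H.antipode ⊗ₘ 𝟙 H.a) ≫ H.mul ≫ θ)) ≫ (ρ_ H.a).hom) ≫ H.comul =
      (𝟙 H.a ⊗ₘ H.comul) ≫ (α_ H.a H.a H.a).inv ≫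
        (((H.comul ⊗ₘ 𝟙 H.a) ≫ (α_ H.a H.a H.a).hom ≫
          (𝟙 H.a ⊗ₘ ((H.antipode ⊗ₘ 𝟙 H.a) ≫ H.mul ≫ θ)) ≫ (ρ_ H.a).hom) ⊗ₘ 𝟙 H.a) ∧
    (∃ π : H.a ⊗ H.a ⟶ H.a,
      H.comul ≫ π = 𝟙 H.a ∧
      (H.comul ⊗ₘ 𝟙 H.a) ≫ (α_ H.a H.a H.a).hom ≫ (𝟙 H.a ⊗ₘ π) = π ≫ H.comul ∧
      π ≫ H.comul = (𝟙 H.a ⊗ₘ H.comul) ≫ (α_ H.a H.a H.a).inv ≫ (π ⊗ₘ 𝟙 H.a)) := by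
  have hco : H.comul ≫ (H.comul ▷ H.a) ≫ (α_ H.a H.a H.a).hom =
      H.comul ≫ (H.a ◁ H.comul) := by simpa using H.comul_coassoc'
  have hma : (H.mul ▷ H.a) ≫ H.mul =
      (α_ H.a H.a H.a).hom ≫ (H.a ◁ H.mul) ≫ H.mul := by simpa using H.mul_assoc'
  have hsl : H.comul ≫ (H.antipode ▷ H.a) ≫ H.mul = H.counit ≫ H.one := by
    simpa using H.antipode_left'
  have hsr : H.comul ≫ (H.a ◁ H.antipode) ≫ H.mul = H.counit ≫ H.one := by
    simpa using H.antipode_right'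
  have hcu : H.comul ≫ (H.a ◁ H.counit) ≫ (ρ_ H.a).hom = 𝟙 H.a := by
    simpa using H.comul_counit'
  have hlu : (H.one ▷ H.a) ≫ H.mul = (λ_ H.a).hom := by
    have h := H.one_mul'
    simp only [MonoidalCategory.tensorHom_id] at h
    rw [Iso.inv_comp_eq] at h
    simpa using h
  have hru : (H.a ◁ H.one) ≫ H.mul = (ρ_ H.a).hom := by
    have h := H.mul_one'
    simp only [MonoidalCategory.id_tensorHom] at h
    rw [Iso.inv_comp_eq] at h
    simpa using h
  have hbi : H.mul ≫ H.comul = ((H.comul ▷ H.a) ≫ ((H.a ⊗ H.a) ◁ H.comul)) ≫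
      mid4 H.a H.a H.a H.a ≫ ((H.mul ▷ (H.a ⊗ H.a)) ≫ (H.a ◁ H.mul)) := by
    rw [H.mul_comul', tensorHom_def H.comul H.comul, tensorHom_def H.mul H.mul]
  have hθ1 : H.comul ≫ (θ ▷ H.a) ≫ (λ_ H.a).hom = θ ≫ H.one := by
    simpa using hθ
  simp only [MonoidalCategory.tensorHom_id, MonoidalCategory.id_tensorHom]
  refine ⟨g1 H.comul H.mul H.antipode H.counit H.one θ hco hcu hsl hnorm,
    g2 H.comul ((H.antipode ▷ H.a) ≫ H.mul ≫ θ) hco,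
    g3 H.comul H.mul H.antipode H.counit H.one θ hco hma hsl hsr hcu hlu hru hbi hθ1,
    (H.comul ▷ H.a) ≫ (α_ H.a H.a H.a).hom ≫
      (H.a ◁ ((H.antipode ▷ H.a) ≫ H.mul ≫ θ)) ≫ (ρ_ H.a).hom,
    g1 H.comul H.mul H.antipode H.counit H.one θ hco hcu hsl hnorm,
    g2 H.comul ((H.antipode ▷ H.a) ≫ H.mul ≫ θ) hco,
    g3 H.comul H.mul H.antipode H.counit H.one θ hco hma hsl hsr hcu hlu hru hbi hθ1⟩
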